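/- If γ ∈ (1, 2) and k_n is a sequence of positive integers with n ≤ γ·k_n, then b(k_n, n) = 1 - 2^{-(n-1)} Σ_{j=0}^{k_n - 1} C(n-1, j) tends to 0 as n → ∞. -/

import Mathlib

open Filter Finset

private lemma sum_range_choose_le_aux (m K : ℕ) :
    ∑ j ∈ Finset.range K, m.choose j ≤ 2 ^ m := by
  rcases le_total K (m+1) with h | h
  · calc ∑ j ∈ Finset.range K, m.choose j
        ≤ ∑ j ∈ Finset.range (m+1), m.choose j :=
          Finset.sum_le_sum_of_subset (Finset.range_subset_range.mpr h)
      _ = 2 ^ m := Nat.sum_range_choose m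
  · have heq : ∑ j ∈ Finset.range (m+1), m.choose j
        = ∑ j ∈ Finset.range K, m.choose j := by
      refine Finset.sum_subset (Finset.range_subset_range.mpr h) ?_
      intro j _ hj
      simp only [Finset.mem_range, not_lt] at hj
      exact Nat.choose_eq_zero_of_lt (by omega)
    rw [← heq, Nat.sum_range_choose]

private lemma exists_u_aux (γ : ℝ) (h1 : 1 < γ) (h2 : γ < 2) :
    ∃ u : ℝ, 1 < u ∧ u ^ γ < 2 * u - 1 := by
  set f : ℝ → ℝ := fun u => 2 * u - 1 - u ^ γ with hf
  have hf1 : f 1 = 0 := by norm_num [hf, Real.one_rpow]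
  have hd : HasDerivAt f (2 - γ) 1 := by
    have h1' : HasDerivAt (fun u : ℝ => 2 * u - 1) 2 1 := by
      simpa using ((hasDerivAt_id (1:ℝ)).const_mul 2).sub_const 1
    have h2' : HasDerivAt (fun u : ℝ => u ^ γ) γ 1 := by
      have := Real.hasDerivAt_rpow_const (x := (1:ℝ)) (p := γ) (Or.inl one_ne_zero)
      simpa [Real.one_rpow] using this
    exact h1'.sub h2'
  rw [hasDerivAt_iff_tendsto_slope] at hd
  have hpos : (0:ℝ) < 2 - γ := by linarith
  have hev : ∀ᶠ u in nhdsWithin (1:ℝ) {(1:ℝ)}ᶜ, 0 < slope f 1 u :=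
    hd.eventually (eventually_gt_nhds hpos)
  have hmono : nhdsWithin (1:ℝ) (Set.Ioi 1) ≤ nhdsWithin (1:ℝ) {(1:ℝ)}ᶜ :=
    nhdsWithin_mono _ (fun x hx => ne_of_gt hx)
  have hev2 : ∀ᶠ u in nhdsWithin (1:ℝ) (Set.Ioi 1),
      0 < slope f 1 u ∧ 1 < u :=
    (hev.filter_mono hmono).and self_mem_nhdsWithin
  obtain ⟨u, hslope, hu1⟩ := hev2.exists
  refine ⟨u, hu1, ?_⟩
  have hne : u - 1 ≠ 0 := by linarith
  have : 0 < (f u - f 1) / (u - 1) := by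
    simpa [slope_def_field, div_eq_iff hne] using hslope
  have hfu : 0 < f u := by
    rw [hf1, sub_zero] at this
    have := mul_pos this (show (0:ℝ) < u - 1 by linarith)
    rwa [div_mul_cancel₀ _ hne] at this
  simp only [hf] at hfu
  linarith

theorem stmt18 (γ : ℝ) (hγ : γ ∈ Set.Ioo (1:ℝ) 2) (k : ℕ → ℕ)
    (hkpos : ∀ n, 1 ≤ k n) (hk : ∀ n : ℕ, (n : ℝ) ≤ γ * (k n : ℝ)) :
    Filter.Tendsto
      (fun n : ℕ =>
        1 - ((1:ℝ)/2) ^ (n-1) * ∑ j ∈ Finset.range (k n), ((n-1).choose j : ℝ))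
      Filter.atTop (nhds 0) := by
  obtain ⟨hγ1, hγ2⟩ := hγ
  obtain ⟨u, hu1, hult⟩ := exists_u_aux γ hγ1 hγ2
  set t : ℝ := 2 * u - 1 with ht
  have ht1 : 1 < t := by simp only [ht]; linarith
  have ht0 : (0:ℝ) < t := by linarith
  set r : ℝ := u ^ γ / t with hr
  have hr0 : 0 ≤ r := div_nonneg (Real.rpow_nonneg (by linarith) γ) (le_of_lt ht0)
  have hr1 : r < 1 := (div_lt_one ht0).mpr hult
  have hk2 : ∀ n, n < 2 * k n := by
    intro n
    by_contra h
    push_neg at h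
    have h' : (2:ℝ) * (k n : ℝ) ≤ (n : ℝ) := by exact_mod_cast h
    have h1 : (1:ℝ) ≤ (k n : ℝ) := by exact_mod_cast hkpos n
    nlinarith [hk n]
  have hktop : Tendsto k atTop atTop := by
    rw [tendsto_atTop_atTop]
    intro b
    exact ⟨2 * b, fun n hn => by have := hk2 n; omega⟩
  have hg : Tendsto (fun n => r ^ k n) atTop (nhds 0) :=
    (tendsto_pow_atTop_nhds_zero_of_lt_one hr0 hr1).comp hktop
  -- key bounds
  have key : ∀ n : ℕ,
      0 ≤ 1 - ((1:ℝ)/2) ^ (n-1) * ∑ j ∈ Finset.range (k n), ((n-1).choose j : ℝ) ∧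
      1 - ((1:ℝ)/2) ^ (n-1) * ∑ j ∈ Finset.range (k n), ((n-1).choose j : ℝ) ≤ r ^ k n := by
    intro n
    set m : ℕ := n - 1 with hm
    set K : ℕ := k n with hK
    have h2m : (0:ℝ) < 2 ^ m := by positivity
    have hhalf : ((1:ℝ)/2) ^ m * 2 ^ m = 1 := by
      rw [div_pow, one_pow, div_mul_cancel₀]
      positivity
    have hSle : (∑ j ∈ Finset.range K, ((m.choose j : ℕ) : ℝ)) ≤ 2 ^ m := by
      have := sum_range_choose_le_aux m K
      calc (∑ j ∈ Finset.range K, ((m.choose j : ℕ) : ℝ))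
          = ((∑ j ∈ Finset.range K, m.choose j : ℕ) : ℝ) := by push_cast; ring
        _ ≤ ((2 ^ m : ℕ) : ℝ) := by exact_mod_cast this
        _ = 2 ^ m := by push_cast; ring
    constructor
    · have : ((1:ℝ)/2) ^ m * ∑ j ∈ Finset.range K, ((m.choose j : ℕ) : ℝ)
          ≤ ((1:ℝ)/2) ^ m * 2 ^ m :=
        mul_le_mul_of_nonneg_left hSle (by positivity)
      rw [hhalf] at this
      linarith
    · rcases le_total (m + 1) K with hcase | hcase
      · -- sum is full: value is 0
        have hSeq : (∑ j ∈ Finset.range K, ((m.choose j : ℕ) : ℝ)) = 2 ^ m := by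
          have hKeq : (∑ j ∈ Finset.range K, m.choose j) = 2 ^ m := by
            have heq : ∑ j ∈ Finset.range (m+1), m.choose j
                = ∑ j ∈ Finset.range K, m.choose j := by
              refine Finset.sum_subset (Finset.range_subset_range.mpr hcase) ?_
              intro j _ hj
              simp only [Finset.mem_range, not_lt] at hj
              exact Nat.choose_eq_zero_of_lt (by omega)
            rw [← heq, Nat.sum_range_choose]
          calc (∑ j ∈ Finset.range K, ((m.choose j : ℕ) : ℝ))
              = ((∑ j ∈ Finset.range K, m.choose j : ℕ) : ℝ) := by push_cast; ring
            _ = 2 ^ m := by rw [hKeq]; push_cast; ring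
        rw [hSeq, hhalf, sub_self]
        positivity
      · -- K ≤ m + 1 : tail bound
        set T : ℝ := ∑ j ∈ Finset.Ico K (m+1), ((m.choose j : ℕ) : ℝ) with hT
        have hsplit : (∑ j ∈ Finset.range K, ((m.choose j : ℕ) : ℝ)) + T = 2 ^ m := by
          rw [hT, Finset.sum_range_add_sum_Ico _ hcase]
          have := Nat.sum_range_choose m
          calc (∑ j ∈ Finset.range (m+1), ((m.choose j : ℕ) : ℝ))
              = ((∑ j ∈ Finset.range (m+1), m.choose j : ℕ) : ℝ) := by push_cast; ring
            _ = 2 ^ m := by rw [this]; push_cast; ring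
        -- generating function bound : T * t^K ≤ (1+t)^m
        have hgen : T * t ^ K ≤ (1 + t) ^ m := by
          have hstep1 : T * t ^ K ≤ ∑ j ∈ Finset.Ico K (m+1), ((m.choose j : ℕ) : ℝ) * t ^ j := by
            rw [hT, Finset.sum_mul]
            refine Finset.sum_le_sum ?_
            intro j hj
            have hj' := Finset.mem_Ico.mp hj
            exact mul_le_mul_of_nonneg_left
              (pow_le_pow_right₀ (le_of_lt ht1) hj'.1) (by positivity)
          have hstep2 : (∑ j ∈ Finset.Ico K (m+1), ((m.choose j : ℕ) : ℝ) * t ^ j)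
              ≤ ∑ j ∈ Finset.range (m+1), ((m.choose j : ℕ) : ℝ) * t ^ j := by
            refine Finset.sum_le_sum_of_subset_of_nonneg ?_ ?_
            · intro j hj
              have := Finset.mem_Ico.mp hj
              exact Finset.mem_range.mpr this.2
            · intro j _ _
              positivity
          have hbinom : (∑ j ∈ Finset.range (m+1), ((m.choose j : ℕ) : ℝ) * t ^ j)
              = (1 + t) ^ m := by
            rw [add_comm 1 t, add_pow t 1 m]
            refine Finset.sum_congr rfl ?_
            intro j _
            rw [one_pow, mul_one, mul_comm]
          linarith
        have hTle : T ≤ (1 + t) ^ m / t ^ K := by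
          rw [le_div_iff₀ (by positivity)]
          exact hgen
        have hval : 1 - ((1:ℝ)/2) ^ m * ∑ j ∈ Finset.range K, ((m.choose j : ℕ) : ℝ)
            = ((1:ℝ)/2) ^ m * T := by
          have : (∑ j ∈ Finset.range K, ((m.choose j : ℕ) : ℝ)) = 2 ^ m - T := by
            linarith
          rw [this]
          rw [mul_sub, hhalf]
          ring
        rw [hval]
        have h2u : 1 + t = 2 * u := by rw [ht]; ring
        have hstep : ((1:ℝ)/2) ^ m * T ≤ u ^ (m:ℕ) / t ^ K := by
          have := mul_le_mul_of_nonneg_left hTle (show (0:ℝ) ≤ ((1:ℝ)/2) ^ m by positivity)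
          calc ((1:ℝ)/2) ^ m * T ≤ ((1:ℝ)/2) ^ m * ((1 + t) ^ m / t ^ K) := this
            _ = u ^ (m:ℕ) / t ^ K := by
                rw [h2u, mul_pow, div_pow, one_pow]
                field_simp
        have hu0 : (0:ℝ) < u := by linarith
        have hexp : u ^ (m:ℕ) ≤ (u ^ γ) ^ K := by
          have h1 : u ^ (m:ℕ) = u ^ ((m:ℕ) : ℝ) := (Real.rpow_natCast u m).symm
          have h2 : ((m:ℕ) : ℝ) ≤ γ * (K : ℝ) := by
            have := hk n
            have hmn : ((m:ℕ) : ℝ) ≤ (n : ℝ) := by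
              exact_mod_cast Nat.cast_le.mpr (Nat.sub_le n 1)
            linarith
          have h3 : u ^ ((m:ℕ) : ℝ) ≤ u ^ (γ * (K : ℝ)) :=
            Real.rpow_le_rpow_of_exponent_le (le_of_lt hu1) h2
          have h4 : u ^ (γ * (K : ℝ)) = (u ^ γ) ^ K := by
            rw [Real.rpow_mul hu0.le]
            exact Real.rpow_natCast _ K
          rw [h1, ← h4]
          exact h3
        calc ((1:ℝ)/2) ^ m * T ≤ u ^ (m:ℕ) / t ^ K := hstep
          _ ≤ (u ^ γ) ^ K / t ^ K := by gcongr
          _ = r ^ K := by rw [hr, div_pow]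
  exact squeeze_zero (fun n => (key n).1) (fun n => (key n).2) hg
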